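/- Fix a real number ε with 0 < ε < 1/4. For each positive integer n set k_n = ⌈n^{3/4+ε}⌉, ℓ_n = ⌊(n − 2·k_n)/k_n⌋, and N_n = k_n·ℓ_n. Call a permutation σ of Fin N_n bad if there exist i, j ∈ Fin k_n and a 3-element subset T of the block {x : Fin N_n | i·ℓ_n ≤ x < (i+1)·ℓ_n} such that σ '' T ⊆ {x : Fin N_n | j·ℓ_n ≤ x < (j+1)·ℓ_n}. Then the proportion of bad permutations, i.e., (number of bad permutations of Fin N_n) / (N_n !), tends to 0 as n → ∞; equivalently, the proportion of good (non-bad) permutations tends to 1. -/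

import Mathlib

/-- `k_n = ⌈n^{3/4+ε}⌉`. -/
noncomputable def specialK (ε : ℝ) (n : ℕ) : ℕ := ⌈(n : ℝ) ^ ((3 : ℝ) / 4 + ε)⌉₊

/-- `ℓ_n = ⌊(n − 2 k_n)/k_n⌋`. -/
noncomputable def specialL (ε : ℝ) (n : ℕ) : ℕ :=
  ⌊((n : ℝ) - 2 * specialK ε n) / specialK ε n⌋₊

/-- A permutation of `Fin (k·ℓ)` is bad if it maps some 3-element subset of a block
`{x | i·ℓ ≤ x < (i+1)·ℓ}` into a block `{x | j·ℓ ≤ x < (j+1)·ℓ}`. -/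
def IsBadPerm (k ℓ : ℕ) (σ : Equiv.Perm (Fin (k * ℓ))) : Prop :=
  ∃ i j : Fin k, ∃ T : Finset (Fin (k * ℓ)), T.card = 3 ∧
    (∀ x ∈ T, (i : ℕ) * ℓ ≤ (x : ℕ) ∧ (x : ℕ) < ((i : ℕ) + 1) * ℓ) ∧
    (∀ x ∈ T, (j : ℕ) * ℓ ≤ (σ x : ℕ) ∧ (σ x : ℕ) < ((j : ℕ) + 1) * ℓ)

open Finset Equiv Filter Real


section Count
variable {α : Type*} [Fintype α] [DecidableEq α]

lemma card_fixing_le (T : Finset α) :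
    (Finset.univ.filter fun τ : Equiv.Perm α => ∀ t ∈ T, τ t = t).card
      ≤ (Fintype.card α - T.card).factorial := by
  rw [← Fintype.card_subtype]
  have e : {τ : Equiv.Perm α // ∀ t ∈ T, τ t = t} ≃ Equiv.Perm {x : α // x ∉ T} :=
    ((Equiv.Perm.subtypeEquivSubtypePerm (fun x => x ∉ T)).trans
      (Equiv.subtypeEquivRight (by intro f; simp [not_not]))).symm
  rw [Fintype.card_congr e, Fintype.card_perm]
  have : Fintype.card {x : α // x ∉ T} = Fintype.card α - T.card := by
    simp [Fintype.card_subtype_compl, Fintype.card_coe]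
  rw [this]

lemma card_constrained (T S : Finset α) (hT : T.card = 3) (s : Finset (Equiv.Perm α))
    (hs : ∀ σ ∈ s, ∀ x ∈ T, σ x ∈ S) :
    s.card ≤ S.card ^ 3 * (Fintype.card α - 3).factorial := by
  have key := Finset.card_le_mul_card_image_of_maps_to
    (f := fun σ : Equiv.Perm α => fun x : {x // x ∈ T} => σ x.1)
    (s := s)
    (t := Fintype.piFinset fun _ : {x // x ∈ T} => S)
    (by intro σ hσ
        rw [Fintype.mem_piFinset]
        exact fun i => hs σ hσ i.1 i.2)
    ((Fintype.card α - 3).factorial)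
    (by intro b hb
        by_cases hne : (s.filter (fun σ => (fun x : {x // x ∈ T} => σ x.1) = b)).Nonempty
        · obtain ⟨σ₀, hσ₀⟩ := hne
          rw [Finset.mem_filter] at hσ₀
          calc _ ≤ (Finset.univ.filter fun τ : Equiv.Perm α => ∀ t ∈ T, τ t = t).card := by
                  apply Finset.card_le_card_of_injOn (fun σ => σ₀⁻¹ * σ)
                  · intro σ hσ
                    rw [Finset.mem_coe, Finset.mem_filter] at hσ
                    rw [Finset.mem_coe]; refine Finset.mem_filter.2 ⟨Finset.mem_univ _, fun t ht => ?_⟩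
                    have h1 : σ t = σ₀ t := by
                      have := hσ.2.trans hσ₀.2.symm
                      exact congrFun this ⟨t, ht⟩
                    simp [Equiv.Perm.mul_apply, h1]
                  · intro a _ b _ hab
                    exact mul_left_cancel hab
            _ ≤ _ := by rw [← hT]; exact card_fixing_le T
        · rw [Finset.not_nonempty_iff_eq_empty] at hne
          rw [hne]; simp)
  calc s.card ≤ (Fintype.card α - 3).factorial
        * (Fintype.piFinset fun _ : {x // x ∈ T} => S).card := key
    _ = S.card ^ 3 * (Fintype.card α - 3).factorial := by
        rw [Fintype.card_piFinset]
        simp [Fintype.card_coe, hT, mul_comm]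

end Count

def blockF (k ℓ : ℕ) (j : Fin k) : Finset (Fin (k * ℓ)) :=
  Finset.univ.filter fun x => (j : ℕ) * ℓ ≤ (x : ℕ) ∧ (x : ℕ) < ((j : ℕ) + 1) * ℓ

lemma blockF_card_le (k ℓ : ℕ) (j : Fin k) : (blockF k ℓ j).card ≤ ℓ := by
  have hring : ((j : ℕ) + 1) * ℓ = (j : ℕ) * ℓ + ℓ := by ring
  have := Finset.card_le_card_of_injOn (f := fun x : Fin (k * ℓ) => (x : ℕ) - (j : ℕ) * ℓ)
    (s := blockF k ℓ j) (t := Finset.range ℓ)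
    (by intro x hx
        obtain ⟨-, h1, h2⟩ := Finset.mem_filter.mp hx
        rw [Finset.mem_coe, Finset.mem_range]
        show (x : ℕ) - (j : ℕ) * ℓ < ℓ
        omega)
    (by intro a ha b hb hab
        obtain ⟨-, ha1, ha2⟩ := Finset.mem_filter.mp ha
        obtain ⟨-, hb1, hb2⟩ := Finset.mem_filter.mp hb
        have hab' : (a : ℕ) - (j : ℕ) * ℓ = (b : ℕ) - (j : ℕ) * ℓ := hab
        apply Fin.ext
        omega)
  simpa using this

lemma card_bad_le (k ℓ : ℕ) :
    Nat.card {σ : Equiv.Perm (Fin (k * ℓ)) // IsBadPerm k ℓ σ}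
      ≤ k ^ 2 * ℓ ^ 6 * (k * ℓ - 3).factorial := by
  classical
  rw [Nat.card_eq_fintype_card, Fintype.card_subtype]
  have hsub : (Finset.univ.filter fun σ : Equiv.Perm (Fin (k * ℓ)) => IsBadPerm k ℓ σ)
      ⊆ (Finset.univ : Finset (Fin k × Fin k)).biUnion (fun p =>
          ((blockF k ℓ p.1).powersetCard 3).biUnion (fun T =>
            Finset.univ.filter fun σ : Equiv.Perm (Fin (k * ℓ)) =>
              ∀ x ∈ T, σ x ∈ blockF k ℓ p.2)) := by
    intro σ hσ
    rw [Finset.mem_filter] at hσ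
    obtain ⟨i, j, T, hT3, hTi, hTj⟩ := hσ.2
    rw [Finset.mem_biUnion]
    refine ⟨(i, j), Finset.mem_univ _, ?_⟩
    rw [Finset.mem_biUnion]
    refine ⟨T, ?_, ?_⟩
    · rw [Finset.mem_powersetCard]
      exact ⟨fun x hx => by simp [blockF, hTi x hx], hT3⟩
    · rw [Finset.mem_filter]
      exact ⟨Finset.mem_univ _, fun x hx => by simp [blockF, hTj x hx]⟩
  calc _ ≤ _ := Finset.card_le_card hsub
    _ ≤ ∑ p ∈ (Finset.univ : Finset (Fin k × Fin k)),
          (((blockF k ℓ p.1).powersetCard 3).biUnion (fun T =>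
            Finset.univ.filter fun σ : Equiv.Perm (Fin (k * ℓ)) =>
              ∀ x ∈ T, σ x ∈ blockF k ℓ p.2)).card := Finset.card_biUnion_le
    _ ≤ ∑ p ∈ (Finset.univ : Finset (Fin k × Fin k)),
          ∑ T ∈ (blockF k ℓ p.1).powersetCard 3,
            (Finset.univ.filter fun σ : Equiv.Perm (Fin (k * ℓ)) =>
              ∀ x ∈ T, σ x ∈ blockF k ℓ p.2).card :=
        Finset.sum_le_sum fun p _ => Finset.card_biUnion_le
    _ ≤ ∑ p ∈ (Finset.univ : Finset (Fin k × Fin k)),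
          ∑ _T ∈ (blockF k ℓ p.1).powersetCard 3,
            (ℓ ^ 3 * (k * ℓ - 3).factorial) := by
        refine Finset.sum_le_sum fun p _ => Finset.sum_le_sum fun T hT => ?_
        rw [Finset.mem_powersetCard] at hT
        have h := card_constrained T (blockF k ℓ p.2) hT.2
          (Finset.univ.filter fun σ : Equiv.Perm (Fin (k * ℓ)) => ∀ x ∈ T, σ x ∈ blockF k ℓ p.2)
          (fun σ hσ => (Finset.mem_filter.1 hσ).2)
        rw [Fintype.card_fin] at h
        exact h.trans (Nat.mul_le_mul_right _ (Nat.pow_le_pow_left (blockF_card_le k ℓ p.2) 3))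
    _ ≤ k ^ 2 * ℓ ^ 6 * (k * ℓ - 3).factorial := by
        have h1 : ∀ p : Fin k × Fin k, ((blockF k ℓ p.1).powersetCard 3).card ≤ ℓ ^ 3 := by
          intro p
          rw [Finset.card_powersetCard]
          calc _ ≤ (blockF k ℓ p.1).card ^ 3 := Nat.choose_le_pow _ _
            _ ≤ ℓ ^ 3 := Nat.pow_le_pow_left (blockF_card_le k ℓ p.1) 3
        calc _ ≤ ∑ _p ∈ (Finset.univ : Finset (Fin k × Fin k)),
                  ℓ ^ 3 * (ℓ ^ 3 * (k * ℓ - 3).factorial) := by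
              refine Finset.sum_le_sum fun p _ => ?_
              rw [Finset.sum_const, smul_eq_mul]
              exact Nat.mul_le_mul_right _ (h1 p)
          _ = (k * k) * (ℓ ^ 3 * (ℓ ^ 3 * (k * ℓ - 3).factorial)) := by
              rw [Finset.sum_const, smul_eq_mul]; simp [Fintype.card_prod]
          _ = k ^ 2 * ℓ ^ 6 * (k * ℓ - 3).factorial := by ring

lemma fact_lb (N : ℕ) (hN : 3 ≤ N) : (N - 2) ^ 3 * (N - 3).factorial ≤ N.factorial := by
  obtain ⟨m, rfl⟩ := Nat.exists_eq_add_of_le hN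
  have h1 : 3 + m - 2 = m + 1 := by omega
  have h2 : 3 + m - 3 = m := by omega
  rw [h1, h2, show 3 + m = (m + 3) by omega]
  have : (m + 3).factorial = (m + 3) * ((m + 2) * ((m + 1) * m.factorial)) := by
    rw [show m + 3 = (m+2)+1 by omega, Nat.factorial_succ, show m + 2 = (m+1)+1 by omega,
      Nat.factorial_succ, Nat.factorial_succ]
  rw [this]
  have key : (m + 1) ^ 3 ≤ (m + 3) * ((m + 2) * (m + 1)) := by nlinarith
  calc (m + 1) ^ 3 * m.factorial ≤ ((m + 3) * ((m + 2) * (m + 1))) * m.factorial :=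
        Nat.mul_le_mul_right _ key
    _ = (m + 3) * ((m + 2) * ((m + 1) * m.factorial)) := by ring

theorem stmt6_aux (ε : ℝ) (hε0 : 0 < ε) (hε : ε < 1 / 4)
    (badcount : ℕ → ℕ)
    (hbc : ∀ n, badcount n ≤ (specialK ε n) ^ 2 * (specialL ε n) ^ 6
        * (specialK ε n * specialL ε n - 3).factorial) :
    Filter.Tendsto (fun n : ℕ => (badcount n : ℝ) /
          (Nat.factorial (specialK ε n * specialL ε n))) Filter.atTop (nhds 0) := by
  set a : ℝ := 3 / 4 + ε with ha
  have ha1 : a < 1 := by rw [ha]; linarith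
  have ha0 : 0 < a := by rw [ha]; linarith
  -- eventual bound
  have hev : ∀ᶠ n : ℕ in atTop, (n : ℝ) ^ a ≤ (n : ℝ) / 24 ∧ 24 ≤ n := by
    have ht : Tendsto (fun n : ℕ => (n : ℝ) ^ (a - 1)) atTop (nhds 0) := by
      have := (tendsto_rpow_neg_atTop (y := 1 - a) (by linarith)).comp
        tendsto_natCast_atTop_atTop
      simpa [Function.comp_def, neg_sub] using this
    have h1 := ht.eventually_le_const (show (0:ℝ) < 1/24 by norm_num)
    filter_upwards [h1, eventually_ge_atTop 24] with n h1 h2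
    refine ⟨?_, h2⟩
    have hn0 : (0:ℝ) < n := by positivity
    have : (n:ℝ) ^ a = (n:ℝ) ^ (a - 1) * n := by
      rw [← Real.rpow_add_one (ne_of_gt hn0)]; ring_nf
    rw [this]
    calc (n:ℝ) ^ (a - 1) * n ≤ (1/24) * n := by
          apply mul_le_mul_of_nonneg_right h1 hn0.le
      _ = n / 24 := by ring
  apply squeeze_zero' (g := fun n : ℕ => 32 * (n : ℝ) ^ (-(4 * ε)))
  · filter_upwards with n; positivity
  · filter_upwards [hev] with n ⟨h24, hn24⟩
    set k := specialK ε n with hk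
    set ℓ := specialL ε n with hℓ
    set N := k * ℓ with hN
    have hn24r : (24:ℝ) ≤ n := by exact_mod_cast hn24
    have hn0 : (0:ℝ) < n := by linarith
    have hn1 : (1:ℝ) ≤ n := by linarith
    have hka : (n:ℝ) ^ a ≤ k := Nat.le_ceil _
    have hna1 : (1:ℝ) ≤ (n:ℝ) ^ a := Real.one_le_rpow hn1 ha0.le
    have hk0 : (0:ℝ) < k := lt_of_lt_of_le (by linarith) hka
    have hkub : (k:ℝ) ≤ 2 * (n:ℝ) ^ a := by
      have := Nat.ceil_lt_add_one (by positivity : (0:ℝ) ≤ (n:ℝ) ^ a)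
      calc (k:ℝ) ≤ (n:ℝ)^a + 1 := le_of_lt this
        _ ≤ 2 * (n:ℝ)^a := by linarith
    have hkn : (k:ℝ) ≤ (n:ℝ) / 12 := by
      calc (k:ℝ) ≤ 2 * (n:ℝ)^a := hkub
        _ ≤ 2 * ((n:ℝ)/24) := by linarith
        _ = (n:ℝ)/12 := by ring
    have h2k : 2 * (k:ℝ) ≤ n := by linarith
    have hquot : (0:ℝ) ≤ ((n:ℝ) - 2 * k) / k := by
      apply div_nonneg (by linarith) hk0.le
    have hlub : (ℓ:ℝ) ≤ ((n:ℝ) - 2 * k) / k := by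
      rw [hℓ]; exact Nat.floor_le hquot
    have hlub2 : (ℓ:ℝ) ≤ (n:ℝ) ^ (1 - a) := by
      calc (ℓ:ℝ) ≤ ((n:ℝ) - 2 * k) / k := hlub
        _ ≤ (n:ℝ) / k := by gcongr; linarith
        _ ≤ (n:ℝ) / (n:ℝ)^a := by gcongr <;> linarith
        _ = (n:ℝ) ^ (1 - a) := by
            rw [Real.rpow_sub hn0, Real.rpow_one]
    have hllb : ((n:ℝ) - 2 * k) / k - 1 ≤ ℓ := by
      have h := Nat.lt_floor_add_one (((n:ℝ) - 2 * k) / k)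
      have hfl : (⌊((n:ℝ) - 2 * (k:ℝ)) / (k:ℝ)⌋₊ : ℝ) = (ℓ:ℝ) := rfl
      rw [hfl] at h; linarith
    have hNlb : (n:ℝ) - 3 * k ≤ (N:ℝ) := by
      have : (N:ℝ) = (k:ℝ) * ℓ := by rw [hN]; push_cast; ring
      rw [this]
      have h1 : (k:ℝ) * (((n:ℝ) - 2 * k) / k - 1) ≤ (k:ℝ) * ℓ :=
        mul_le_mul_of_nonneg_left hllb hk0.le
      have h2 : (k:ℝ) * (((n:ℝ) - 2 * k) / k - 1) = (n:ℝ) - 3 * k := by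
        field_simp; ring
      linarith
    have hN34 : 3 * (n:ℝ) / 4 ≤ N := by
      calc 3 * (n:ℝ) / 4 = (n:ℝ) - (n:ℝ)/4 := by ring
        _ ≤ (n:ℝ) - 3 * k := by linarith
        _ ≤ N := hNlb
    have hN3 : 3 ≤ N := by
      have : (3:ℝ) ≤ N := by linarith
      exact_mod_cast this
    have hN2 : (n:ℝ) / 2 ≤ (N:ℝ) - 2 := by
      have : (2:ℝ) ≤ (n:ℝ)/4 := by linarith
      linarith
    have hN2pos : (0:ℝ) < (N:ℝ) - 2 := by linarith
    -- factorial bound in ℝ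
    have hfact : ((N:ℝ) - 2) ^ 3 * ((N - 3).factorial : ℝ) ≤ (N.factorial : ℝ) := by
      have := fact_lb N hN3
      have hcast : ((N:ℝ) - 2) = ((N - 2 : ℕ) : ℝ) := by
        rw [Nat.cast_sub (by omega)]; norm_num
      rw [hcast]
      exact_mod_cast this
    have hfp : (0:ℝ) < ((N - 3).factorial : ℝ) := by exact_mod_cast Nat.factorial_pos _
    have hCnum : (badcount n : ℝ) ≤ (k:ℝ)^2 * (ℓ:ℝ)^6 * ((N - 3).factorial : ℝ) := by
      have := hbc n
      exact_mod_cast this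
    calc (badcount n : ℝ) / (N.factorial : ℝ)
        ≤ ((k:ℝ)^2 * (ℓ:ℝ)^6 * ((N - 3).factorial : ℝ))
            / (((N:ℝ) - 2) ^ 3 * ((N - 3).factorial : ℝ)) := by
          apply div_le_div₀ (by positivity) hCnum (by positivity) hfact
      _ = (k:ℝ)^2 * (ℓ:ℝ)^6 / ((N:ℝ) - 2) ^ 3 := by
          rw [mul_div_mul_right _ _ (ne_of_gt hfp)]
      _ ≤ (2 * (n:ℝ)^a)^2 * ((n:ℝ)^(1-a))^6 / ((n:ℝ)/2) ^ 3 := by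
          apply div_le_div₀ (by positivity) ?_ (by positivity) ?_
          · apply mul_le_mul ?_ ?_ (by positivity) (by positivity)
            · exact pow_le_pow_left₀ (by positivity) hkub 2
            · exact pow_le_pow_left₀ (by positivity) hlub2 6
          · exact pow_le_pow_left₀ (by linarith) hN2 3
      _ = 32 * (n:ℝ) ^ (-(4 * ε)) := by
          have h2 : ((n:ℝ)^a)^(2:ℕ) = (n:ℝ)^(a*2) := by
            rw [← Real.rpow_natCast ((n:ℝ)^a) 2, ← Real.rpow_mul hn0.le]; norm_num
          have h6 : ((n:ℝ)^(1-a))^(6:ℕ) = (n:ℝ)^((1-a)*6) := by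
            rw [← Real.rpow_natCast ((n:ℝ)^(1-a)) 6, ← Real.rpow_mul hn0.le]; norm_num
          have h3 : (n:ℝ)^(3:ℕ) = (n:ℝ)^((3:ℝ)) := by
            rw [← Real.rpow_natCast (n:ℝ) 3]; norm_num
          rw [mul_pow, h2, h6, div_pow, h3, div_div_eq_mul_div,
            div_eq_iff (by positivity : ((n:ℝ)^((3:ℝ))) ≠ 0)]
          have l1 : (2:ℝ)^2 * (n:ℝ)^(a*2) * (n:ℝ)^((1-a)*6) * 2^3
              = 32 * ((n:ℝ)^(a*2) * (n:ℝ)^((1-a)*6)) := by ring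
          rw [l1, ← Real.rpow_add hn0, mul_assoc, ← Real.rpow_add hn0]
          congr 1
          rw [ha]; ring
  · have : Tendsto (fun n : ℕ => (n : ℝ) ^ (-(4 * ε))) atTop (nhds 0) :=
      (tendsto_rpow_neg_atTop (by linarith)).comp tendsto_natCast_atTop_atTop
    simpa using this.const_mul 32


/-- For `0 < ε < 1/4`, with `k_n = ⌈n^{3/4+ε}⌉`, `ℓ_n = ⌊(n − 2k_n)/k_n⌋` and `N_n = k_n ℓ_n`,
the proportion of bad permutations of `Fin N_n` tends to `0` as `n → ∞`. -/
theorem stmt6 (ε : ℝ) (hε0 : 0 < ε) (hε : ε < 1 / 4) :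
    Filter.Tendsto (fun n : ℕ =>
        (Nat.card {σ : Equiv.Perm (Fin (specialK ε n * specialL ε n)) //
            IsBadPerm (specialK ε n) (specialL ε n) σ} : ℝ) /
          (Nat.factorial (specialK ε n * specialL ε n))) Filter.atTop (nhds 0) :=
  stmt6_aux ε hε0 hε
    (fun n => Nat.card {σ : Equiv.Perm (Fin (specialK ε n * specialL ε n)) //
        IsBadPerm (specialK ε n) (specialL ε n) σ})
    (fun n => card_bad_le (specialK ε n) (specialL ε n))
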